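/- For every n ≥ 1 and every i with 1 ≤ i ≤ n one has τₙ ∘ δᵢ = δ_{i-1} ∘ τ_{n-1} as linear maps H^{⊗(n-1)} → H^{⊗n}. -/

import Mathlib

/-!
Let `H` be a Hopf algebra over `ℂ` with coproduct `Δ = Coalgebra.comul`, counit
`ε = Coalgebra.counit`, antipode `S = HopfAlgebra.antipode` and unit `1`.  We fix a
character `δ : H →ₐ[ℂ] ℂ`.  The `δ`-twisted antipode is the linear map
`S̃(h) = ∑ δ(h₍₁₎) S(h₍₂₎)`.
-/

open TensorProduct

noncomputable section

variable (H : Type) [Ring H] [HopfAlgebra ℂ H]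

/-- The `δ`-twisted antipode `S̃(h) = ∑ δ(h₍₁₎) S(h₍₂₎)`. -/
def twistedAntipode (δ : H →ₐ[ℂ] ℂ) : H →ₗ[ℂ] H :=
  (TensorProduct.lid ℂ H).toLinearMap ∘ₗ
    (TensorProduct.map δ.toLinearMap (HopfAlgebra.antipode (R := ℂ))) ∘ₗ
      Coalgebra.comul

/-- A type bundled with a `ℂ`-algebra structure (used to form iterated tensor powers). -/
structure AlgPack : Type 1 where
  carrier : Type
  [ring : Ring carrier]
  [alg : Algebra ℂ carrier]

attribute [instance] AlgPack.ring AlgPack.alg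

/-- The iterated tensor powers of `H`: `XB H n` bundles `H^{⊗(n+1)}` together with its
(componentwise) algebra structure coming from `Algebra.TensorProduct`. -/
def XB : ℕ → AlgPack
  | 0 => ⟨H⟩
  | n + 1 => ⟨H ⊗[ℂ] (XB n).carrier⟩

/-- `X H n` is the tensor power `H^{⊗(n+1)}`; its multiplication `*` is the componentwise
product and its unit `1` is `1 ⊗ ... ⊗ 1`. -/
abbrev X (n : ℕ) : Type := (XB H n).carrier

/-- The pure tensor `h 0 ⊗ h 1 ⊗ ... ⊗ h n ∈ H^{⊗(n+1)}`. -/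
def tp : ∀ n, (Fin (n + 1) → H) → X H n
  | 0, h => h 0
  | n + 1, h => h 0 ⊗ₜ[ℂ] tp n (Fin.tail h)

/-- The `n`-fold iterated coproduct `Δ⁽ⁿ⁾ : H →ₗ H^{⊗(n+1)}`. -/
def Δiter : ∀ n, H →ₗ[ℂ] X H n
  | 0 => LinearMap.id
  | n + 1 => (TensorProduct.map LinearMap.id (Δiter n)) ∘ₗ Coalgebra.comul

/-- The face operators `δᵢ : H^{⊗(n+1)} →ₗ H^{⊗(n+2)}` (`0 ≤ i ≤ n + 2`):
`δ₀ = 1 ⊗ ·`, `δⱼ` applies `Δ` to the `j`-th factor for `1 ≤ j ≤ n + 1`, and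
`δ_{n+2}` appends `1` on the right. -/
def dX : ℕ → ∀ n, X H n →ₗ[ℂ] X H (n + 1)
  | 0, n => TensorProduct.mk ℂ H (X H n) 1
  | 1, 0 => (Coalgebra.comul : H →ₗ[ℂ] H ⊗[ℂ] H)
  | 1, n + 1 => (TensorProduct.assoc ℂ H H (X H n)).toLinearMap ∘ₗ
      (TensorProduct.map Coalgebra.comul LinearMap.id)
  | _ + 2, 0 => (TensorProduct.mk ℂ H H).flip 1
  | i + 2, n + 1 => TensorProduct.map LinearMap.id (dX (i + 1) n)

/-- The degeneracy operators `σᵢ : H^{⊗(n+2)} →ₗ H^{⊗(n+1)}` (`0 ≤ i ≤ n + 1`):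
`σᵢ` applies the counit `ε` to the `(i+1)`-st factor. -/
def sX : ℕ → ∀ n, X H (n + 1) →ₗ[ℂ] X H n
  | 0, n => (TensorProduct.lid ℂ (X H n)).toLinearMap ∘ₗ
      TensorProduct.map Coalgebra.counit LinearMap.id
  | _ + 1, 0 => (TensorProduct.rid ℂ H).toLinearMap ∘ₗ
      TensorProduct.map LinearMap.id (Coalgebra.counit : H →ₗ[ℂ] ℂ)
  | i + 1, n + 1 => TensorProduct.map LinearMap.id (sX i n)

/-- Appending `1 ∈ H` on the right: `h¹ ⊗ ... ⊗ h^{n+1} ↦ h¹ ⊗ ... ⊗ h^{n+1} ⊗ 1`. -/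
def appOne : ∀ n, X H n →ₗ[ℂ] X H (n + 1)
  | 0 => (TensorProduct.mk ℂ H H).flip 1
  | n + 1 => TensorProduct.map LinearMap.id (appOne n)

/-- The cyclic operator `τₙ : H^{⊗n} →ₗ H^{⊗n}` (here at index `X H n = H^{⊗(n+1)}`):
`τ(h¹ ⊗ ... ⊗ h^{n+1}) = Δ⁽ⁿ⁾(S̃(h¹)) · (h² ⊗ ... ⊗ h^{n+1} ⊗ 1)`,
where `·` is the componentwise product of `H^{⊗(n+1)}`. -/
def tauX (δ : H →ₐ[ℂ] ℂ) : ∀ n, X H n →ₗ[ℂ] X H n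
  | 0 => twistedAntipode H δ
  | n + 1 => LinearMap.mul' ℂ (X H (n + 1)) ∘ₗ
      TensorProduct.map (Δiter H (n + 1) ∘ₗ twistedAntipode H δ) (appOne H n)

attribute [reducible] XB

section Conv
variable {A B : Type} [Ring A] [Algebra ℂ A] [Ring B] [Algebra ℂ B]

def conv (f g : H →ₗ[ℂ] A) : H →ₗ[ℂ] A :=
  LinearMap.mul' ℂ A ∘ₗ TensorProduct.map f g ∘ₗ Coalgebra.comul

def cunit : H →ₗ[ℂ] A := Algebra.linearMap ℂ A ∘ₗ Coalgebra.counit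

lemma algHom_comp_mul' (f : A →ₐ[ℂ] B) :
    f.toLinearMap ∘ₗ LinearMap.mul' ℂ A
      = LinearMap.mul' ℂ B ∘ₗ TensorProduct.map f.toLinearMap f.toLinearMap := by
  apply TensorProduct.ext'; intro a b; simp

lemma algHom_comp_conv (φ : A →ₐ[ℂ] B) (f g : H →ₗ[ℂ] A) :
    φ.toLinearMap ∘ₗ conv H f g = conv H (φ.toLinearMap ∘ₗ f) (φ.toLinearMap ∘ₗ g) := by
  rw [conv, conv, ← LinearMap.comp_assoc, ← LinearMap.comp_assoc, ← LinearMap.comp_assoc,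
    algHom_comp_mul', LinearMap.comp_assoc (TensorProduct.map _ _), ← TensorProduct.map_comp]

lemma conv_assoc (f g h : H →ₗ[ℂ] A) :
    conv H (conv H f g) h = conv H f (conv H g h) := by
  have M1 : TensorProduct.map (conv H f g) h
      = TensorProduct.map (LinearMap.mul' ℂ A ∘ₗ TensorProduct.map f g) h
        ∘ₗ (Coalgebra.comul (R := ℂ) (A := H)).rTensor H := by
    rw [conv, ← LinearMap.comp_assoc, LinearMap.rTensor, ← TensorProduct.map_comp,
      LinearMap.comp_id]
  have M2 : TensorProduct.map f (conv H g h)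
      = TensorProduct.map f (LinearMap.mul' ℂ A ∘ₗ TensorProduct.map g h)
        ∘ₗ (Coalgebra.comul (R := ℂ) (A := H)).lTensor H := by
    rw [conv, ← LinearMap.comp_assoc, LinearMap.lTensor, ← TensorProduct.map_comp,
      LinearMap.comp_id]
  have E3 : (LinearMap.mul' ℂ A ∘ₗ TensorProduct.map (LinearMap.mul' ℂ A ∘ₗ TensorProduct.map f g) h)
      = (LinearMap.mul' ℂ A ∘ₗ TensorProduct.map f (LinearMap.mul' ℂ A ∘ₗ TensorProduct.map g h))
        ∘ₗ (TensorProduct.assoc ℂ H H H).toLinearMap := by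
    apply TensorProduct.ext_threefold; intro a b c; simp [mul_assoc]
  have s1 : conv H (conv H f g) h
      = LinearMap.mul' ℂ A ∘ₗ TensorProduct.map (conv H f g) h ∘ₗ Coalgebra.comul := rfl
  have s2 : conv H f (conv H g h)
      = LinearMap.mul' ℂ A ∘ₗ TensorProduct.map f (conv H g h) ∘ₗ Coalgebra.comul := rfl
  rw [s1, s2, M1, M2]
  simp only [LinearMap.comp_assoc]
  rw [← LinearMap.comp_assoc, E3]
  simp only [LinearMap.comp_assoc]
  rw [← Coalgebra.coassoc]

lemma conv_cunit (f : H →ₗ[ℂ] A) : conv H f (cunit H) = f := by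
  have E : LinearMap.mul' ℂ A ∘ₗ TensorProduct.map f (cunit H)
      = f ∘ₗ (TensorProduct.rid ℂ H).toLinearMap ∘ₗ (Coalgebra.counit (R := ℂ) (A := H)).lTensor H := by
    apply TensorProduct.ext'; intro a b
    simp only [LinearMap.coe_comp, Function.comp_apply, map_tmul, LinearMap.lTensor_tmul,
      LinearEquiv.coe_coe, rid_tmul, map_smul]
    show f a * cunit H b = _
    rw [cunit]
    simp only [LinearMap.coe_comp, Function.comp_apply, Algebra.linearMap_apply]
    rw [← Algebra.commutes, ← Algebra.smul_def]
  ext h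
  have h1 : conv H f (cunit H) h
      = (LinearMap.mul' ℂ A ∘ₗ TensorProduct.map f (cunit H)) (Coalgebra.comul h) := rfl
  rw [h1, E]
  simp [Coalgebra.lTensor_counit_comul (R := ℂ) h]

lemma cunit_conv (f : H →ₗ[ℂ] A) : conv H (cunit H) f = f := by
  have E : LinearMap.mul' ℂ A ∘ₗ TensorProduct.map (cunit H) f
      = f ∘ₗ (TensorProduct.lid ℂ H).toLinearMap ∘ₗ (Coalgebra.counit (R := ℂ) (A := H)).rTensor H := by
    apply TensorProduct.ext'; intro a b
    simp only [LinearMap.coe_comp, Function.comp_apply, map_tmul, LinearMap.rTensor_tmul,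
      LinearEquiv.coe_coe, lid_tmul, map_smul]
    show cunit H a * f b = _
    rw [cunit]
    simp only [LinearMap.coe_comp, Function.comp_apply, Algebra.linearMap_apply]
    rw [← Algebra.smul_def]
  ext h
  have h1 : conv H (cunit H) f h
      = (LinearMap.mul' ℂ A ∘ₗ TensorProduct.map (cunit H) f) (Coalgebra.comul h) := rfl
  rw [h1, E]
  simp [Coalgebra.rTensor_counit_comul (R := ℂ) h]

end Conv

section Core
open HopfAlgebra

lemma comulAlgHom_toLinearMap :
    (Bialgebra.comulAlgHom ℂ H).toLinearMap = (Coalgebra.comul (R := ℂ) (A := H)) := rfl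

lemma includeRight_toLinearMap :
    (Algebra.TensorProduct.includeRight : H →ₐ[ℂ] H ⊗[ℂ] H).toLinearMap = (TensorProduct.mk ℂ H H 1) :=
  LinearMap.ext fun _ => rfl

lemma conv_antipode_id : conv H (HopfAlgebra.antipode (R := ℂ) (A := H)) LinearMap.id = cunit H := by
  rw [conv, cunit]
  exact HopfAlgebra.mul_antipode_rTensor_comul

lemma comul_comp_cunit : (Coalgebra.comul (R := ℂ) (A := H)) ∘ₗ (cunit H : H →ₗ[ℂ] H) = cunit H := by
  ext h
  simp [cunit, Algebra.algebraMap_eq_smul_one, Algebra.TensorProduct.one_def]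

lemma CS_conv_C : conv H ((Coalgebra.comul (R := ℂ) (A := H)) ∘ₗ (HopfAlgebra.antipode (R := ℂ) (A := H))) (Coalgebra.comul (R := ℂ) (A := H)) = cunit H := by
  have h := algHom_comp_conv H (Bialgebra.comulAlgHom ℂ H) (HopfAlgebra.antipode (R := ℂ) (A := H)) LinearMap.id
  rw [conv_antipode_id, comulAlgHom_toLinearMap, LinearMap.comp_id, comul_comp_cunit] at h
  exact h.symm

lemma conv_j1_j2 : conv H ((TensorProduct.mk ℂ H H).flip 1) (TensorProduct.mk ℂ H H 1) = (Coalgebra.comul (R := ℂ) (A := H)) := by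
  have E : LinearMap.mul' ℂ (H ⊗[ℂ] H) ∘ₗ TensorProduct.map ((TensorProduct.mk ℂ H H).flip 1) (TensorProduct.mk ℂ H H 1) = LinearMap.id := by
    apply TensorProduct.ext'; intro a b
    simp [Algebra.TensorProduct.tmul_mul_tmul]
  rw [conv, ← LinearMap.comp_assoc, E, LinearMap.id_comp]

lemma j2_comp_cunit : (TensorProduct.mk ℂ H H 1) ∘ₗ (cunit H : H →ₗ[ℂ] H) = cunit H := by
  ext h
  simp [cunit, Algebra.algebraMap_eq_smul_one, Algebra.TensorProduct.one_def]

lemma conv_j2S_j2 : conv H ((TensorProduct.mk ℂ H H 1) ∘ₗ (HopfAlgebra.antipode (R := ℂ) (A := H))) (TensorProduct.mk ℂ H H 1) = cunit H := by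
  have E : LinearMap.mul' ℂ (H ⊗[ℂ] H) ∘ₗ TensorProduct.map ((TensorProduct.mk ℂ H H 1) ∘ₗ (HopfAlgebra.antipode (R := ℂ) (A := H))) (TensorProduct.mk ℂ H H 1)
      = (TensorProduct.mk ℂ H H 1) ∘ₗ LinearMap.mul' ℂ H ∘ₗ TensorProduct.map (HopfAlgebra.antipode (R := ℂ) (A := H)) LinearMap.id := by
    apply TensorProduct.ext'; intro a b
    simp [Algebra.TensorProduct.tmul_mul_tmul]
  have h2 : (LinearMap.mul' ℂ H ∘ₗ TensorProduct.map (HopfAlgebra.antipode (R := ℂ) (A := H)) LinearMap.id) ∘ₗ (Coalgebra.comul (R := ℂ) (A := H)) = cunit H :=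
    HopfAlgebra.mul_antipode_rTensor_comul
  rw [conv, ← LinearMap.comp_assoc, E, LinearMap.comp_assoc, LinearMap.comp_assoc,
    ← LinearMap.comp_assoc (Coalgebra.comul) (TensorProduct.map _ _) (LinearMap.mul' ℂ H),
    h2, j2_comp_cunit]

lemma conv_j2_j2S : conv H (TensorProduct.mk ℂ H H 1) ((TensorProduct.mk ℂ H H 1) ∘ₗ (HopfAlgebra.antipode (R := ℂ) (A := H))) = cunit H := by
  have E : LinearMap.mul' ℂ (H ⊗[ℂ] H) ∘ₗ TensorProduct.map (TensorProduct.mk ℂ H H 1) ((TensorProduct.mk ℂ H H 1) ∘ₗ (HopfAlgebra.antipode (R := ℂ) (A := H)))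
      = (TensorProduct.mk ℂ H H 1) ∘ₗ LinearMap.mul' ℂ H ∘ₗ TensorProduct.map LinearMap.id (HopfAlgebra.antipode (R := ℂ) (A := H)) := by
    apply TensorProduct.ext'; intro a b
    simp [Algebra.TensorProduct.tmul_mul_tmul]
  have h2 : (LinearMap.mul' ℂ H ∘ₗ TensorProduct.map LinearMap.id (HopfAlgebra.antipode (R := ℂ) (A := H))) ∘ₗ (Coalgebra.comul (R := ℂ) (A := H)) = cunit H :=
    HopfAlgebra.mul_antipode_lTensor_comul
  rw [conv, ← LinearMap.comp_assoc, E, LinearMap.comp_assoc, LinearMap.comp_assoc,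
    ← LinearMap.comp_assoc (Coalgebra.comul) (TensorProduct.map _ _) (LinearMap.mul' ℂ H),
    h2, j2_comp_cunit]

lemma coreS : conv H ((Coalgebra.comul (R := ℂ) (A := H)) ∘ₗ (HopfAlgebra.antipode (R := ℂ) (A := H))) ((TensorProduct.mk ℂ H H).flip 1) = (TensorProduct.mk ℂ H H 1) ∘ₗ (HopfAlgebra.antipode (R := ℂ) (A := H)) := by
  have h1 : conv H (conv H ((Coalgebra.comul (R := ℂ) (A := H)) ∘ₗ (HopfAlgebra.antipode (R := ℂ) (A := H))) ((TensorProduct.mk ℂ H H).flip 1)) (TensorProduct.mk ℂ H H 1) = cunit H := by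
    rw [conv_assoc, conv_j1_j2, CS_conv_C]
  calc conv H ((Coalgebra.comul (R := ℂ) (A := H)) ∘ₗ (HopfAlgebra.antipode (R := ℂ) (A := H))) ((TensorProduct.mk ℂ H H).flip 1)
      = conv H (conv H ((Coalgebra.comul (R := ℂ) (A := H)) ∘ₗ (HopfAlgebra.antipode (R := ℂ) (A := H))) ((TensorProduct.mk ℂ H H).flip 1)) (cunit H) := (conv_cunit H _).symm
    _ = conv H (conv H ((Coalgebra.comul (R := ℂ) (A := H)) ∘ₗ (HopfAlgebra.antipode (R := ℂ) (A := H))) ((TensorProduct.mk ℂ H H).flip 1)) (conv H (TensorProduct.mk ℂ H H 1) ((TensorProduct.mk ℂ H H 1) ∘ₗ (HopfAlgebra.antipode (R := ℂ) (A := H)))) := by rw [conv_j2_j2S]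
    _ = conv H (conv H (conv H ((Coalgebra.comul (R := ℂ) (A := H)) ∘ₗ (HopfAlgebra.antipode (R := ℂ) (A := H))) ((TensorProduct.mk ℂ H H).flip 1)) (TensorProduct.mk ℂ H H 1)) ((TensorProduct.mk ℂ H H 1) ∘ₗ (HopfAlgebra.antipode (R := ℂ) (A := H))) := (conv_assoc H _ _ _).symm
    _ = conv H (cunit H) ((TensorProduct.mk ℂ H H 1) ∘ₗ (HopfAlgebra.antipode (R := ℂ) (A := H))) := by rw [h1]
    _ = (TensorProduct.mk ℂ H H 1) ∘ₗ (HopfAlgebra.antipode (R := ℂ) (A := H)) := cunit_conv H _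

variable (δ : H →ₐ[ℂ] ℂ)

lemma twisted_eq :
    twistedAntipode H δ = conv H (Algebra.linearMap ℂ H ∘ₗ δ.toLinearMap) (HopfAlgebra.antipode (R := ℂ) (A := H)) := by
  have E : LinearMap.mul' ℂ H ∘ₗ TensorProduct.map (Algebra.linearMap ℂ H ∘ₗ δ.toLinearMap) (HopfAlgebra.antipode (R := ℂ) (A := H))
      = (TensorProduct.lid ℂ H).toLinearMap ∘ₗ TensorProduct.map δ.toLinearMap (HopfAlgebra.antipode (R := ℂ) (A := H)) := by
    apply TensorProduct.ext'; intro a b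
    simp [Algebra.smul_def]
  rw [twistedAntipode, conv, ← LinearMap.comp_assoc, ← LinearMap.comp_assoc, E]

lemma comul_comp_dl :
    (Coalgebra.comul (R := ℂ) (A := H)) ∘ₗ (Algebra.linearMap ℂ H ∘ₗ δ.toLinearMap)
      = (TensorProduct.mk ℂ H H 1) ∘ₗ (Algebra.linearMap ℂ H ∘ₗ δ.toLinearMap) := by
  ext h
  simp [Algebra.algebraMap_eq_smul_one, Algebra.TensorProduct.one_def]

lemma core0 : conv H ((Coalgebra.comul (R := ℂ) (A := H)) ∘ₗ twistedAntipode H δ) ((TensorProduct.mk ℂ H H).flip 1) = (TensorProduct.mk ℂ H H 1) ∘ₗ twistedAntipode H δ := by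
  rw [twisted_eq]
  have p1 : (Coalgebra.comul (R := ℂ) (A := H)) ∘ₗ conv H (Algebra.linearMap ℂ H ∘ₗ δ.toLinearMap) (HopfAlgebra.antipode (R := ℂ) (A := H))
      = conv H ((Coalgebra.comul (R := ℂ) (A := H)) ∘ₗ (Algebra.linearMap ℂ H ∘ₗ δ.toLinearMap)) ((Coalgebra.comul (R := ℂ) (A := H)) ∘ₗ (HopfAlgebra.antipode (R := ℂ) (A := H))) := by
    have h := algHom_comp_conv H (Bialgebra.comulAlgHom ℂ H)
      (Algebra.linearMap ℂ H ∘ₗ δ.toLinearMap) (HopfAlgebra.antipode (R := ℂ) (A := H))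
    rwa [comulAlgHom_toLinearMap] at h
  have p2 : (TensorProduct.mk ℂ H H 1) ∘ₗ conv H (Algebra.linearMap ℂ H ∘ₗ δ.toLinearMap) (HopfAlgebra.antipode (R := ℂ) (A := H))
      = conv H ((TensorProduct.mk ℂ H H 1) ∘ₗ (Algebra.linearMap ℂ H ∘ₗ δ.toLinearMap)) ((TensorProduct.mk ℂ H H 1) ∘ₗ (HopfAlgebra.antipode (R := ℂ) (A := H))) := by
    have h := algHom_comp_conv H (Algebra.TensorProduct.includeRight : H →ₐ[ℂ] H ⊗[ℂ] H)
      (Algebra.linearMap ℂ H ∘ₗ δ.toLinearMap) (HopfAlgebra.antipode (R := ℂ) (A := H))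
    rwa [includeRight_toLinearMap] at h
  rw [p1, conv_assoc, coreS, comul_comp_dl, p2]

end Core

section Simplicial
variable {H}

def dA : ℕ → ∀ n, X H n →ₐ[ℂ] X H (n + 1)
  | 0, n => Algebra.TensorProduct.includeRight (R := ℂ) (A := H) (B := X H n)
  | 1, 0 => Bialgebra.comulAlgHom ℂ H
  | 1, n + 1 => (Algebra.TensorProduct.assoc ℂ ℂ ℂ H H (X H n)).toAlgHom.comp
      (Algebra.TensorProduct.map (Bialgebra.comulAlgHom ℂ H) (AlgHom.id ℂ (X H n)))
  | _ + 2, 0 => Algebra.TensorProduct.includeLeft (R := ℂ) (S := ℂ) (A := H) (B := H)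
  | i + 2, n + 1 => Algebra.TensorProduct.map (AlgHom.id ℂ H) (dA (i + 1) n)

lemma dA_toLinearMap : ∀ i n, (dA (H := H) i n).toLinearMap = dX H i n
  | 0, n => LinearMap.ext fun _ => rfl
  | 1, 0 => rfl
  | 1, n + 1 => rfl
  | i + 2, 0 => LinearMap.ext fun _ => rfl
  | i + 2, n + 1 => by
    have ih := dA_toLinearMap (i + 1) n
    show (Algebra.TensorProduct.map (AlgHom.id ℂ H) (dA (i+1) n)).toLinearMap
        = TensorProduct.map LinearMap.id (dX H (i+1) n)
    apply TensorProduct.ext'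
    intro a u
    rw [← ih]
    rfl

lemma dX_comp_mul' (i n : ℕ) :
    dX H i n ∘ₗ LinearMap.mul' ℂ (X H n)
      = LinearMap.mul' ℂ (X H (n + 1)) ∘ₗ TensorProduct.map (dX H i n) (dX H i n) := by
  rw [← dA_toLinearMap]
  exact algHom_comp_mul' (dA i n)

end Simplicial

section Faces
variable {H}

lemma map_left_split {M N P Q T : Type} [AddCommGroup M] [AddCommGroup N] [AddCommGroup P]
    [AddCommGroup Q] [AddCommGroup T] [Module ℂ M] [Module ℂ N] [Module ℂ P] [Module ℂ Q]
    [Module ℂ T] (f₁ : M →ₗ[ℂ] N) (f₂ : N →ₗ[ℂ] P) (g : Q →ₗ[ℂ] T) :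
    TensorProduct.map (f₂ ∘ₗ f₁) g
      = TensorProduct.map f₂ g ∘ₗ TensorProduct.map f₁ LinearMap.id := by
  rw [← TensorProduct.map_comp, LinearMap.comp_id]

lemma map_right_split {M N P Q T : Type} [AddCommGroup M] [AddCommGroup N] [AddCommGroup P]
    [AddCommGroup Q] [AddCommGroup T] [Module ℂ M] [Module ℂ N] [Module ℂ P] [Module ℂ Q]
    [Module ℂ T] (f : M →ₗ[ℂ] N) (g₁ : Q →ₗ[ℂ] T) (g₂ : T →ₗ[ℂ] P) :
    TensorProduct.map f (g₂ ∘ₗ g₁)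
      = TensorProduct.map f g₂ ∘ₗ TensorProduct.map LinearMap.id g₁ := by
  rw [← TensorProduct.map_comp, LinearMap.comp_id]

lemma map_right_split' {M N P Q T : Type} [AddCommGroup M] [AddCommGroup N] [AddCommGroup P]
    [AddCommGroup Q] [AddCommGroup T] [Module ℂ M] [Module ℂ N] [Module ℂ P] [Module ℂ Q]
    [Module ℂ T] (f : M →ₗ[ℂ] N) (g₁ : Q →ₗ[ℂ] T) (g₂ : T →ₗ[ℂ] P) :
    TensorProduct.map f (g₂ ∘ₗ g₁)
      = TensorProduct.map LinearMap.id g₂ ∘ₗ TensorProduct.map f g₁ := by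
  rw [← TensorProduct.map_comp, LinearMap.id_comp]

lemma map_left_split' {M N P Q T : Type} [AddCommGroup M] [AddCommGroup N] [AddCommGroup P]
    [AddCommGroup Q] [AddCommGroup T] [Module ℂ M] [Module ℂ N] [Module ℂ P] [Module ℂ Q]
    [Module ℂ T] (f₁ : M →ₗ[ℂ] N) (f₂ : N →ₗ[ℂ] P) (g : Q →ₗ[ℂ] T) :
    TensorProduct.map (f₂ ∘ₗ f₁) g
      = TensorProduct.map f₂ LinearMap.id ∘ₗ TensorProduct.map f₁ g := by
  rw [← TensorProduct.map_comp, LinearMap.id_comp]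

lemma Δiter_one : Δiter H 1 = (Coalgebra.comul : H →ₗ[ℂ] H ⊗[ℂ] H) := by
  show TensorProduct.map LinearMap.id (Δiter H 0) ∘ₗ Coalgebra.comul = _
  rw [show Δiter H 0 = LinearMap.id from rfl, TensorProduct.map_id, LinearMap.id_comp]

/-- generalized coassociativity: face 1 -/
lemma dX_one_comp_Δiter : ∀ n, dX H 1 n ∘ₗ Δiter H n = Δiter H (n + 1)
  | 0 => by
    show Coalgebra.comul ∘ₗ LinearMap.id = Δiter H 1
    rw [LinearMap.comp_id, Δiter_one]
  | n + 1 => by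
    have claim1 : dX H 1 (n + 1) ∘ₗ TensorProduct.map (LinearMap.id : H →ₗ[ℂ] H) (Δiter H n)
        = ((TensorProduct.assoc ℂ H H (X H n)).toLinearMap
            ∘ₗ TensorProduct.map (LinearMap.id : (H ⊗[ℂ] H) →ₗ[ℂ] H ⊗[ℂ] H) (Δiter H n))
          ∘ₗ (Coalgebra.comul (R := ℂ) (A := H)).rTensor H := by
      apply TensorProduct.ext'
      intro a u
      rfl
    have claim2 : TensorProduct.map (LinearMap.id : H →ₗ[ℂ] H) (Δiter H (n + 1))
        = (TensorProduct.map LinearMap.id (TensorProduct.map LinearMap.id (Δiter H n)))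
          ∘ₗ (Coalgebra.comul (R := ℂ) (A := H)).lTensor H := by
      apply TensorProduct.ext'
      intro a u
      rfl
    have claim3 : (TensorProduct.assoc ℂ H H (X H n)).toLinearMap
          ∘ₗ TensorProduct.map (LinearMap.id : (H ⊗[ℂ] H) →ₗ[ℂ] H ⊗[ℂ] H) (Δiter H n)
        = TensorProduct.map LinearMap.id (TensorProduct.map LinearMap.id (Δiter H n))
          ∘ₗ (TensorProduct.assoc ℂ H H H).toLinearMap := by
      apply TensorProduct.ext_threefold
      intro a b u
      rfl
    have lhs : dX H 1 (n + 1) ∘ₗ Δiter H (n + 1)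
        = (dX H 1 (n + 1) ∘ₗ TensorProduct.map (LinearMap.id : H →ₗ[ℂ] H) (Δiter H n))
          ∘ₗ Coalgebra.comul := rfl
    have rhs : Δiter H (n + 2)
        = (TensorProduct.map (LinearMap.id : H →ₗ[ℂ] H) (Δiter H (n + 1)))
          ∘ₗ Coalgebra.comul := rfl
    rw [lhs, rhs, claim1, claim2]
    simp only [LinearMap.comp_assoc]
    rw [← Coalgebra.coassoc]
    simp only [← LinearMap.comp_assoc]
    rw [claim3]

lemma dX_comp_Δiter : ∀ (j n : ℕ), j ≤ n → dX H (j + 1) n ∘ₗ Δiter H n = Δiter H (n + 1)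
  | 0, n, _ => dX_one_comp_Δiter n
  | j + 1, n + 1, h => by
    have ih := dX_comp_Δiter j n (by omega)
    show TensorProduct.map LinearMap.id (dX H (j + 1) n)
        ∘ₗ (TensorProduct.map LinearMap.id (Δiter H n) ∘ₗ Coalgebra.comul)
      = TensorProduct.map LinearMap.id (Δiter H (n + 1)) ∘ₗ Coalgebra.comul
    rw [← LinearMap.comp_assoc, ← TensorProduct.map_comp, LinearMap.id_comp, ih]

/-- appOne commutes with the Δ-type faces -/
lemma appOne_comp_dX : ∀ (j n : ℕ), j ≤ n + 1 →
    appOne H (n + 1) ∘ₗ dX H (j + 1) n = dX H (j + 1) (n + 1) ∘ₗ appOne H n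
  | 0, 0, _ => by
    have c1 : TensorProduct.map (Coalgebra.comul (R := ℂ) (A := H)) (LinearMap.id (M := H))
          ∘ₗ (TensorProduct.mk ℂ H H).flip 1
        = (TensorProduct.mk ℂ (H ⊗[ℂ] H) H).flip 1 ∘ₗ Coalgebra.comul := by
      apply LinearMap.ext; intro h; rfl
    have c2 : (TensorProduct.assoc ℂ H H H).toLinearMap ∘ₗ (TensorProduct.mk ℂ (H ⊗[ℂ] H) H).flip 1
        = TensorProduct.map LinearMap.id ((TensorProduct.mk ℂ H H).flip 1) := by
      apply TensorProduct.ext'; intro a b; rfl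
    show TensorProduct.map LinearMap.id (appOne H 0) ∘ₗ Coalgebra.comul
      = ((TensorProduct.assoc ℂ H H H).toLinearMap
          ∘ₗ TensorProduct.map Coalgebra.comul LinearMap.id) ∘ₗ (TensorProduct.mk ℂ H H).flip 1
    rw [LinearMap.comp_assoc, c1, ← LinearMap.comp_assoc, c2]
    rfl
  | 0, n + 1, _ => by
    have c1 : TensorProduct.map (LinearMap.id : H →ₗ[ℂ] H) (appOne H (n + 1))
          ∘ₗ (TensorProduct.assoc ℂ H H (X H n)).toLinearMap
        = (TensorProduct.assoc ℂ H H (X H (n + 1))).toLinearMap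
          ∘ₗ TensorProduct.map LinearMap.id (appOne H n) := by
      apply TensorProduct.ext_threefold; intro a b u; rfl
    have c2 : TensorProduct.map (LinearMap.id : (H ⊗[ℂ] H) →ₗ[ℂ] H ⊗[ℂ] H) (appOne H n)
          ∘ₗ TensorProduct.map (Coalgebra.comul (R := ℂ) (A := H)) LinearMap.id
        = TensorProduct.map Coalgebra.comul LinearMap.id
          ∘ₗ TensorProduct.map LinearMap.id (appOne H n) := by
      apply TensorProduct.ext'; intro a u; rfl
    show TensorProduct.map LinearMap.id (appOne H (n + 1)) ∘ₗ
        ((TensorProduct.assoc ℂ H H (X H n)).toLinearMap ∘ₗ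
          TensorProduct.map Coalgebra.comul LinearMap.id)
      = ((TensorProduct.assoc ℂ H H (X H (n + 1))).toLinearMap ∘ₗ
          TensorProduct.map Coalgebra.comul LinearMap.id) ∘ₗ TensorProduct.map LinearMap.id (appOne H n)
    rw [← LinearMap.comp_assoc, c1, LinearMap.comp_assoc, c2, ← LinearMap.comp_assoc]
  | j + 1, 0, h => by
    have hj : j = 0 := by omega
    subst hj
    show TensorProduct.map LinearMap.id (appOne H 0) ∘ₗ (TensorProduct.mk ℂ H H).flip 1
      = TensorProduct.map LinearMap.id (dX H 1 0) ∘ₗ (TensorProduct.mk ℂ H H).flip 1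
    apply LinearMap.ext; intro h'
    show h' ⊗ₜ[ℂ] ((1 : H) ⊗ₜ[ℂ] (1 : H)) = h' ⊗ₜ[ℂ] Coalgebra.comul (1 : H)
    rw [Bialgebra.comul_one, Algebra.TensorProduct.one_def]
  | j + 1, n + 1, h => by
    have ih := appOne_comp_dX j n (by omega)
    show TensorProduct.map LinearMap.id (appOne H (n + 1))
        ∘ₗ TensorProduct.map LinearMap.id (dX H (j + 1) n)
      = TensorProduct.map LinearMap.id (dX H (j + 1) (n + 1))
        ∘ₗ TensorProduct.map LinearMap.id (appOne H n)
    rw [← TensorProduct.map_comp, ← TensorProduct.map_comp, LinearMap.id_comp, ih]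

end Faces

section Main
variable {H}

def tauCore (n : ℕ) : H ⊗[ℂ] X H n →ₗ[ℂ] X H (n + 1) :=
  LinearMap.mul' ℂ (X H (n + 1)) ∘ₗ TensorProduct.map (Δiter H (n + 1)) (appOne H n)

variable (δ : H →ₐ[ℂ] ℂ)

lemma tauX_succ (n : ℕ) : tauX H δ (n + 1)
    = tauCore n ∘ₗ TensorProduct.map (twistedAntipode H δ) LinearMap.id := by
  show LinearMap.mul' ℂ (X H (n + 1))
      ∘ₗ TensorProduct.map (Δiter H (n + 1) ∘ₗ twistedAntipode H δ) (appOne H n) = _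
  rw [tauCore, LinearMap.comp_assoc, ← TensorProduct.map_comp, LinearMap.comp_id]

lemma case_ge2_succ (j n : ℕ) (h : j ≤ n + 1) :
    tauX H δ (n + 2) ∘ₗ dX H (j + 2) (n + 1) = dX H (j + 1) (n + 1) ∘ₗ tauX H δ (n + 1) := by
  have e1 : tauX H δ (n + 2) ∘ₗ dX H (j + 2) (n + 1)
      = LinearMap.mul' ℂ (X H (n + 2)) ∘ₗ TensorProduct.map
          (Δiter H (n + 2) ∘ₗ twistedAntipode H δ) (appOne H (n + 1) ∘ₗ dX H (j + 1) n) := by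
    show (LinearMap.mul' ℂ (X H (n + 2)) ∘ₗ TensorProduct.map
          (Δiter H (n + 2) ∘ₗ twistedAntipode H δ) (appOne H (n + 1)))
        ∘ₗ TensorProduct.map LinearMap.id (dX H (j + 1) n) = _
    rw [LinearMap.comp_assoc, ← TensorProduct.map_comp, LinearMap.comp_id]
  have e2 : TensorProduct.map ((dX H (j + 1) (n + 1) ∘ₗ Δiter H (n + 1)) ∘ₗ twistedAntipode H δ)
        (dX H (j + 1) (n + 1) ∘ₗ appOne H n)
      = TensorProduct.map (dX H (j + 1) (n + 1)) (dX H (j + 1) (n + 1))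
        ∘ₗ TensorProduct.map (Δiter H (n + 1) ∘ₗ twistedAntipode H δ) (appOne H n) := by
    rw [← TensorProduct.map_comp, LinearMap.comp_assoc]
  rw [e1, appOne_comp_dX j n h, ← dX_comp_Δiter j (n + 1) (by omega), e2,
    ← LinearMap.comp_assoc, ← dX_comp_mul', LinearMap.comp_assoc]
  rfl

lemma case_two_zero : tauX H δ 1 ∘ₗ dX H 2 0 = dX H 1 0 ∘ₗ tauX H δ 0 := by
  apply LinearMap.ext; intro h
  show LinearMap.mul' ℂ (H ⊗[ℂ] H)
      ((Δiter H 1) (twistedAntipode H δ h) ⊗ₜ[ℂ] ((1 : H) ⊗ₜ[ℂ] (1 : H)))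
    = Coalgebra.comul (twistedAntipode H δ h)
  rw [LinearMap.mul'_apply, ← Algebra.TensorProduct.one_def, mul_one, Δiter_one]

def Gmap : H ⊗[ℂ] H →ₗ[ℂ] H ⊗[ℂ] H :=
  LinearMap.mul' ℂ (H ⊗[ℂ] H) ∘ₗ TensorProduct.map Coalgebra.comul ((TensorProduct.mk ℂ H H).flip 1)

lemma tauCore_assoc (n : ℕ) :
    tauCore (n + 1) ∘ₗ (TensorProduct.assoc ℂ H H (X H n)).toLinearMap
      = TensorProduct.map LinearMap.id (tauCore n)
        ∘ₗ (TensorProduct.assoc ℂ H H (X H n)).toLinearMap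
        ∘ₗ TensorProduct.map Gmap LinearMap.id := by
  apply TensorProduct.ext_threefold; intro a b u
  have key : LinearMap.mulRight ℂ (b ⊗ₜ[ℂ] appOne H n u)
        ∘ₗ TensorProduct.map LinearMap.id (Δiter H (n + 1))
      = TensorProduct.map LinearMap.id (tauCore n)
        ∘ₗ (TensorProduct.assoc ℂ H H (X H n)).toLinearMap
        ∘ₗ ((TensorProduct.mk ℂ (H ⊗[ℂ] H) (X H n)).flip u)
        ∘ₗ LinearMap.mulRight ℂ (b ⊗ₜ[ℂ] (1 : H)) := by
    apply TensorProduct.ext'; intro p q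
    show (p ⊗ₜ[ℂ] Δiter H (n + 1) q) * (b ⊗ₜ[ℂ] appOne H n u)
        = TensorProduct.map LinearMap.id (tauCore n)
            ((TensorProduct.assoc ℂ H H (X H n))
              (((p ⊗ₜ[ℂ] q) * (b ⊗ₜ[ℂ] (1 : H))) ⊗ₜ[ℂ] u))
    rw [Algebra.TensorProduct.tmul_mul_tmul, Algebra.TensorProduct.tmul_mul_tmul, mul_one]
    rfl
  exact LinearMap.congr_fun key (Coalgebra.comul a)

lemma Gcore : Gmap ∘ₗ (TensorProduct.map (twistedAntipode H δ) LinearMap.id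
      ∘ₗ (Coalgebra.comul : H →ₗ[ℂ] H ⊗[ℂ] H))
    = TensorProduct.mk ℂ H H 1 ∘ₗ twistedAntipode H δ := by
  have e : TensorProduct.map (Coalgebra.comul (R := ℂ) (A := H)) ((TensorProduct.mk ℂ H H).flip 1)
        ∘ₗ TensorProduct.map (twistedAntipode H δ) LinearMap.id
      = TensorProduct.map (Coalgebra.comul ∘ₗ twistedAntipode H δ)
          ((TensorProduct.mk ℂ H H).flip 1) := by
    rw [← TensorProduct.map_comp, LinearMap.comp_id]
  have e2 : Gmap ∘ₗ (TensorProduct.map (twistedAntipode H δ) LinearMap.id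
        ∘ₗ (Coalgebra.comul : H →ₗ[ℂ] H ⊗[ℂ] H))
      = conv H (Coalgebra.comul ∘ₗ twistedAntipode H δ) ((TensorProduct.mk ℂ H H).flip 1) := by
    rw [Gmap, conv, LinearMap.comp_assoc, ← LinearMap.comp_assoc _ _ (TensorProduct.map _ _), e]
  rw [e2, core0]

lemma case_one_zero : tauX H δ 1 ∘ₗ dX H 1 0 = dX H 0 0 ∘ₗ tauX H δ 0 := by
  have e : tauX H δ 1 ∘ₗ dX H 1 0
      = conv H (Coalgebra.comul ∘ₗ twistedAntipode H δ) ((TensorProduct.mk ℂ H H).flip 1) := by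
    show LinearMap.mul' ℂ (X H 1)
        ∘ₗ TensorProduct.map (Δiter H 1 ∘ₗ twistedAntipode H δ) (appOne H 0)
        ∘ₗ Coalgebra.comul = _
    rw [Δiter_one, conv]
    rfl
  rw [e, core0]
  rfl

lemma case_one_succ (n : ℕ) :
    tauX H δ (n + 2) ∘ₗ dX H 1 (n + 1) = dX H 0 (n + 1) ∘ₗ tauX H δ (n + 1) := by
  have A1 : TensorProduct.map (twistedAntipode H δ) (LinearMap.id : X H (n+1) →ₗ[ℂ] X H (n+1))
        ∘ₗ (TensorProduct.assoc ℂ H H (X H n)).toLinearMap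
      = (TensorProduct.assoc ℂ H H (X H n)).toLinearMap
        ∘ₗ TensorProduct.map (TensorProduct.map (twistedAntipode H δ) LinearMap.id) LinearMap.id := by
    apply TensorProduct.ext_threefold; intro a b u; rfl
  have F : TensorProduct.map LinearMap.id (tauCore n)
        ∘ₗ (TensorProduct.assoc ℂ H H (X H n)).toLinearMap
        ∘ₗ TensorProduct.map (TensorProduct.mk ℂ H H 1) LinearMap.id
      = dX H 0 (n + 1) ∘ₗ tauCore n := by
    apply TensorProduct.ext'; intro h u; rfl
  have hdX : dX H 1 (n + 1) = (TensorProduct.assoc ℂ H H (X H n)).toLinearMap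
      ∘ₗ TensorProduct.map Coalgebra.comul LinearMap.id := rfl
  calc tauX H δ (n + 2) ∘ₗ dX H 1 (n + 1)
      = tauCore (n + 1)
        ∘ₗ (TensorProduct.map (twistedAntipode H δ) LinearMap.id
              ∘ₗ (TensorProduct.assoc ℂ H H (X H n)).toLinearMap)
        ∘ₗ TensorProduct.map Coalgebra.comul LinearMap.id := by
        rw [tauX_succ, hdX]
        simp only [LinearMap.comp_assoc]
    _ = (tauCore (n + 1) ∘ₗ (TensorProduct.assoc ℂ H H (X H n)).toLinearMap)
        ∘ₗ TensorProduct.map (TensorProduct.map (twistedAntipode H δ) LinearMap.id) LinearMap.id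
        ∘ₗ TensorProduct.map Coalgebra.comul LinearMap.id := by
        rw [A1]
        simp only [LinearMap.comp_assoc]
    _ = (TensorProduct.map LinearMap.id (tauCore n)
          ∘ₗ (TensorProduct.assoc ℂ H H (X H n)).toLinearMap
          ∘ₗ TensorProduct.map Gmap LinearMap.id)
        ∘ₗ TensorProduct.map (TensorProduct.map (twistedAntipode H δ) LinearMap.id ∘ₗ Coalgebra.comul) LinearMap.id := by
        rw [tauCore_assoc, ← TensorProduct.map_comp, LinearMap.comp_id]
    _ = TensorProduct.map LinearMap.id (tauCore n)
        ∘ₗ (TensorProduct.assoc ℂ H H (X H n)).toLinearMap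
        ∘ₗ TensorProduct.map (Gmap ∘ₗ (TensorProduct.map (twistedAntipode H δ) LinearMap.id
            ∘ₗ Coalgebra.comul)) LinearMap.id := by
        simp only [LinearMap.comp_assoc, ← TensorProduct.map_comp, LinearMap.comp_id,
          LinearMap.id_comp]
    _ = TensorProduct.map LinearMap.id (tauCore n)
        ∘ₗ (TensorProduct.assoc ℂ H H (X H n)).toLinearMap
        ∘ₗ TensorProduct.map (TensorProduct.mk ℂ H H 1) LinearMap.id
        ∘ₗ TensorProduct.map (twistedAntipode H δ) LinearMap.id := by
        rw [Gcore, map_left_split]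
    _ = (TensorProduct.map LinearMap.id (tauCore n)
          ∘ₗ (TensorProduct.assoc ℂ H H (X H n)).toLinearMap
          ∘ₗ TensorProduct.map (TensorProduct.mk ℂ H H 1) LinearMap.id)
        ∘ₗ TensorProduct.map (twistedAntipode H δ) LinearMap.id := by
        simp only [LinearMap.comp_assoc]
    _ = dX H 0 (n + 1) ∘ₗ tauX H δ (n + 1) := by
        rw [F, tauX_succ]
        simp only [LinearMap.comp_assoc]

lemma case_one : ∀ m, tauX H δ (m + 1) ∘ₗ dX H 1 m = dX H 0 m ∘ₗ tauX H δ m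
  | 0 => case_one_zero δ
  | n + 1 => case_one_succ δ n

end Main

/-- For every `n ≥ 1` and every `i` with `1 ≤ i ≤ n` one has
`τₙ ∘ δᵢ = δ_{i-1} ∘ τ_{n-1}` as linear maps `H^{⊗(n-1)} → H^{⊗n}` (here `n = m + 2`,
`H^{⊗(n-1)} = X H m`, `H^{⊗n} = X H (m+1)`). -/
theorem tauX_comp_d (δ : H →ₐ[ℂ] ℂ) :
    ∀ (m i : ℕ), 1 ≤ i → i ≤ m + 2 →
      tauX H δ (m + 1) ∘ₗ dX H i m = dX H (i - 1) m ∘ₗ tauX H δ m := by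
  intro m i h1 h2
  match i, h1 with
  | 1, _ => exact case_one δ m
  | (j + 2), _ =>
    show tauX H δ (m + 1) ∘ₗ dX H (j + 2) m = dX H (j + 1) m ∘ₗ tauX H δ m
    match m, h2 with
    | 0, h2 =>
      have hj : j = 0 := by omega
      subst hj
      exact case_two_zero δ
    | n + 1, h2 => exact case_ge2_succ δ j n (by omega)
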